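/- Let E be a finite set of network elements with conductances G : E → ℝ, G_e > 0, and voltage drops d : E → ℂ. Let K be a finite set of loads; for each k ∈ K let v_k ∈ ℂ be the load-bus voltage, y_k ∈ ℂ the load admittance, Y^max_k ≥ 0 with |y_k| ≤ Y^max_k, and φ ∈ ℝ an augmentation angle. Suppose each load k is assigned a nonempty path Π_k ⊆ E, the Π_k are pairwise disjoint, and each path ends at a ground/source node so that Σ_{e∈Π_k} d_e = v_k. Define G_{Π_k} = (Σ_{e∈Π_k} 1/G_e)⁻¹ and assume G_{Π_k} > Y^max_k for every k ∈ K. Then Σ_{e∈E} G_e|d_e|² + Σ_{k∈K} Re(e^{iφ} y_k)|v_k|² ≥ Σ_{k∈K} (G_{Π_k} − Y^max_k)|v_k|², and this total Augmented Power Dissipation is strictly positive whenever v_k ≠ 0 for some k ∈ K. -/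

import Mathlib

lemma path_bound {E : Type*} (G : E → ℝ) (hG : ∀ e, 0 < G e) (d : E → ℂ)
    (s : Finset E) (hs : s.Nonempty) :
    (∑ e ∈ s, (G e)⁻¹)⁻¹ * ‖∑ e ∈ s, d e‖ ^ 2
      ≤ ∑ e ∈ s, G e * ‖d e‖ ^ 2 := by
  have hSpos : 0 < ∑ e ∈ s, (G e)⁻¹ :=
    Finset.sum_pos (fun e _ => inv_pos.mpr (hG e)) hs
  rw [inv_mul_le_iff₀ hSpos, mul_comm]
  have h1 : ‖∑ e ∈ s, d e‖ ≤ ∑ e ∈ s, ‖d e‖ :=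
    norm_sum_le _ _
  have hcs := Finset.sum_mul_sq_le_sq_mul_sq s (fun e => Real.sqrt ((G e)⁻¹))
    (fun e => Real.sqrt (G e) * ‖d e‖)
  have heq : ∀ e ∈ s, Real.sqrt ((G e)⁻¹) * (Real.sqrt (G e) * ‖d e‖)
      = ‖d e‖ := by
    intro e _
    rw [← mul_assoc, Real.sqrt_inv, inv_mul_cancel₀ (Real.sqrt_pos.mpr (hG e)).ne', one_mul]
  have heq2 : ∀ e ∈ s, (Real.sqrt ((G e)⁻¹)) ^ 2 = (G e)⁻¹ := fun e _ =>
    Real.sq_sqrt (inv_nonneg.mpr (hG e).le)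
  have heq3 : ∀ e ∈ s, (Real.sqrt (G e) * ‖d e‖) ^ 2
      = G e * ‖d e‖ ^ 2 := by
    intro e _
    rw [mul_pow, Real.sq_sqrt (hG e).le]
  rw [Finset.sum_congr rfl heq, Finset.sum_congr rfl heq2, Finset.sum_congr rfl heq3] at hcs
  calc ‖∑ e ∈ s, d e‖ ^ 2 ≤ (∑ e ∈ s, ‖d e‖) ^ 2 := by
        apply pow_le_pow_left₀ (by positivity) h1
    _ ≤ _ := hcs
    _ = _ := mul_comm _ _

/-- Main stability theorem: with a load path decomposition in which every path ends at
ground/source (`Σ_{e∈Π_k} d_e = v_k`) and `G_{Π_k} > Y^max_k` for all loads, the total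
Augmented Power Dissipation is bounded below by `Σ_k (G_{Π_k} − Y^max_k)|v_k|²` and is
strictly positive whenever some load-bus voltage is nonzero. -/
theorem stmt_4 {E K : Type*} [Fintype E] [Fintype K]
    (G : E → ℝ) (hG : ∀ e, 0 < G e) (d : E → ℂ)
    (v y : K → ℂ) (Ymax : K → ℝ) (φ : ℝ)
    (hYmax : ∀ k, 0 ≤ Ymax k) (hy : ∀ k, ‖y k‖ ≤ Ymax k)
    (P : K → Finset E) (hne : ∀ k, (P k).Nonempty)
    (hdisj : ∀ k k', k ≠ k' → Disjoint (P k) (P k'))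
    (hend : ∀ k, ∑ e ∈ P k, d e = v k)
    (hGP : ∀ k, (∑ e ∈ P k, (G e)⁻¹)⁻¹ > Ymax k) :
    (∑ e, G e * ‖d e‖ ^ 2
        + ∑ k, (Complex.exp (φ * Complex.I) * y k).re * ‖v k‖ ^ 2 ≥
      ∑ k, ((∑ e ∈ P k, (G e)⁻¹)⁻¹ - Ymax k) * ‖v k‖ ^ 2) ∧
    ((∃ k, v k ≠ 0) →
      0 < ∑ e, G e * ‖d e‖ ^ 2
        + ∑ k, (Complex.exp (φ * Complex.I) * y k).re * ‖v k‖ ^ 2) := by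
  classical
  -- bound on the conductance sum
  have hE : ∑ k, (∑ e ∈ P k, (G e)⁻¹)⁻¹ * ‖v k‖ ^ 2
      ≤ ∑ e, G e * ‖d e‖ ^ 2 := by
    have h1 : ∀ k : K, (∑ e ∈ P k, (G e)⁻¹)⁻¹ * ‖v k‖ ^ 2
        ≤ ∑ e ∈ P k, G e * ‖d e‖ ^ 2 := by
      intro k
      rw [← hend k]
      exact path_bound G hG d (P k) (hne k)
    calc ∑ k, (∑ e ∈ P k, (G e)⁻¹)⁻¹ * ‖v k‖ ^ 2
        ≤ ∑ k, ∑ e ∈ P k, G e * ‖d e‖ ^ 2 := Finset.sum_le_sum fun k _ => h1 k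
      _ = ∑ e ∈ Finset.univ.biUnion P, G e * ‖d e‖ ^ 2 := by
          rw [Finset.sum_biUnion]
          intro k _ k' _ hkk'
          exact hdisj k k' hkk'
      _ ≤ ∑ e, G e * ‖d e‖ ^ 2 := by
          apply Finset.sum_le_sum_of_subset_of_nonneg (Finset.subset_univ _)
          intro e _ _; exact mul_nonneg (hG e).le (sq_nonneg _)
  have hRe : ∀ k : K, -(Ymax k) ≤ (Complex.exp (φ * Complex.I) * y k).re := by
    intro k
    have h1 : ‖Complex.exp (φ * Complex.I) * y k‖ = ‖y k‖ := by
      rw [norm_mul, Complex.norm_exp_ofReal_mul_I, one_mul]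
    have h2 := neg_abs_le (Complex.exp (φ * Complex.I) * y k).re
    have h3 := Complex.abs_re_le_norm (Complex.exp (φ * Complex.I) * y k)
    rw [h1] at h3
    nlinarith [abs_nonneg (Complex.exp (φ * Complex.I) * y k).re, hy k]
  have hK : ∑ k, (-(Ymax k)) * ‖v k‖ ^ 2
      ≤ ∑ k, (Complex.exp (φ * Complex.I) * y k).re * ‖v k‖ ^ 2 :=
    Finset.sum_le_sum fun k _ => mul_le_mul_of_nonneg_right (hRe k) (by positivity)
  have hmain : ∑ k, ((∑ e ∈ P k, (G e)⁻¹)⁻¹ - Ymax k) * ‖v k‖ ^ 2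
      ≤ ∑ e, G e * ‖d e‖ ^ 2
        + ∑ k, (Complex.exp (φ * Complex.I) * y k).re * ‖v k‖ ^ 2 := by
    have := add_le_add hE hK
    calc ∑ k, ((∑ e ∈ P k, (G e)⁻¹)⁻¹ - Ymax k) * ‖v k‖ ^ 2
        = ∑ k, (∑ e ∈ P k, (G e)⁻¹)⁻¹ * ‖v k‖ ^ 2
          + ∑ k, (-(Ymax k)) * ‖v k‖ ^ 2 := by
          rw [← Finset.sum_add_distrib]
          apply Finset.sum_congr rfl; intro k _; ring
      _ ≤ _ := this
  refine ⟨hmain, ?_⟩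
  rintro ⟨k0, hk0⟩
  have hpos : 0 < ∑ k, ((∑ e ∈ P k, (G e)⁻¹)⁻¹ - Ymax k) * ‖v k‖ ^ 2 := by
    apply Finset.sum_pos' (fun k _ =>
      mul_nonneg (sub_nonneg.mpr (hGP k).le) (sq_nonneg _))
    refine ⟨k0, Finset.mem_univ _, ?_⟩
    have h1 : 0 < (∑ e ∈ P k0, (G e)⁻¹)⁻¹ - Ymax k0 := sub_pos.mpr (hGP k0)
    have h2 : 0 < ‖v k0‖ := by
      simpa using norm_pos_iff.mpr hk0
    positivity
  linarith
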